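/- arXiv:2404.01195 — 2 statements merged into one kernel-verified Lean document; each statement's English description precedes it below -/
import Mathlib

section
/- For a Gaussian random variable Δ_N ~ N(μ, τ²) with μ = o_x + c₁ o_z and τ = σ√(1+c₁²), and reliability level r ∈ (1/2, 1), the minimizer s* of |s| over the set {s ∈ ℝ : P(Δ_N + s ≤ 0) ≥ r} equals -max(0, erf⁻¹(2r-1)·σ·√(2(1+c₁²)) + o_x + c₁ o_z). -/
open MeasureTheory ProbabilityTheory

/-- The Gaussian error function erf(x) = (2/√π) ∫₀ˣ e^{-t²} dt. -/
noncomputable def erf (x : ℝ) : ℝ :=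
  (2 / Real.sqrt Real.pi) * ∫ t in (0 : ℝ)..x, Real.exp (-t ^ 2)

/-- The inverse of the Gaussian error function. -/
noncomputable def erfinv : ℝ → ℝ := Function.invFun erf

open Real Set Filter intervalIntegral in
lemma exp_neg_sq_integrable : Integrable (fun t : ℝ => Real.exp (-t ^ 2)) := by
  simpa using integrable_exp_neg_mul_sq (by norm_num : (0:ℝ) < 1)

lemma erf_zero : erf 0 = 0 := by simp [erf]

open Real in
lemma erf_strictMono : StrictMono erf := by
  intro x y hxy
  have hadd := intervalIntegral.integral_add_adjacent_intervals
    (exp_neg_sq_integrable.intervalIntegrable (a := 0) (b := x))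
    (exp_neg_sq_integrable.intervalIntegrable (a := x) (b := y))
  have hpos : 0 < ∫ t in x..y, Real.exp (-t ^ 2) :=
    intervalIntegral.intervalIntegral_pos_of_pos
      (exp_neg_sq_integrable.intervalIntegrable) (fun t => Real.exp_pos _) hxy
  have hc : 0 < 2 / Real.sqrt Real.pi :=
    div_pos two_pos (Real.sqrt_pos.2 Real.pi_pos)
  have : erf y - erf x = (2 / Real.sqrt Real.pi) * ∫ t in x..y, Real.exp (-t ^ 2) := by
    rw [erf, erf, ← mul_sub, ← hadd]; ring
  nlinarith

lemma erf_continuous : Continuous erf := by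
  exact continuous_const.mul
    (intervalIntegral.continuous_primitive
      (fun a b => exp_neg_sq_integrable.intervalIntegrable) 0)

open Real Filter in
lemma erf_tendsto : Tendsto erf atTop (nhds 1) := by
  have hI : ∫ t in Set.Ioi (0:ℝ), Real.exp (-t ^ 2) = Real.sqrt Real.pi / 2 := by
    simpa using integral_gaussian_Ioi 1
  have h1 : Tendsto (fun b : ℝ => ∫ t in (0:ℝ)..b, Real.exp (-t ^ 2)) atTop
      (nhds (Real.sqrt Real.pi / 2)) := by
    rw [← hI]
    exact intervalIntegral_tendsto_integral_Ioi 0 exp_neg_sq_integrable.integrableOn tendsto_id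
  have := h1.const_mul (2 / Real.sqrt Real.pi)
  have hπ : Real.sqrt Real.pi ≠ 0 := ne_of_gt (Real.sqrt_pos.2 Real.pi_pos)
  have heq : (2 / Real.sqrt Real.pi) * (Real.sqrt Real.pi / 2) = 1 := by
    field_simp
  rw [heq] at this
  exact this

open Filter in
lemma erf_surj {y : ℝ} (h0 : 0 ≤ y) (h1 : y < 1) : ∃ x, erf x = y := by
  obtain ⟨b, hby, hb0⟩ :=
    ((erf_tendsto.eventually (lt_mem_nhds h1)).and (eventually_ge_atTop (0:ℝ))).exists
  have hsub := intermediate_value_Icc hb0 erf_continuous.continuousOn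
  have : y ∈ Set.Icc (erf 0) (erf b) := by
    rw [erf_zero]; exact ⟨h0, hby.le⟩
  obtain ⟨x, _, hx⟩ := hsub this
  exact ⟨x, hx⟩

lemma erf_erfinv {y : ℝ} (h0 : 0 ≤ y) (h1 : y < 1) : erf (erfinv y) = y :=
  Function.invFun_eq (erf_surj h0 h1)

open Real Set in
lemma gauss_cdf (μ : ℝ) (v : NNReal) (hv : 0 < (v:ℝ)) (a : ℝ) :
    ∫ x in Iic a, gaussianPDFReal μ v x
      = (1 + erf ((a - μ) / Real.sqrt (2 * v))) / 2 := by
  set c : ℝ := Real.sqrt (2 * v) with hc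
  have hcpos : 0 < c := Real.sqrt_pos.2 (by positivity)
  have hcsq : c ^ 2 = 2 * v := Real.sq_sqrt (by positivity)
  set K : ℝ := (Real.sqrt (2 * π * v))⁻¹ with hK
  have hKpos : 0 < K := by
    rw [hK]
    exact inv_pos.2 (Real.sqrt_pos.2 (by positivity))
  have hpdf : ∀ x : ℝ, gaussianPDFReal μ v x = K * Real.exp (-((x - μ) / c) ^ 2) := by
    intro x
    rw [gaussianPDFReal, hK]
    congr 1
    rw [div_pow, hcsq]
    ring_nf
  -- value at μ : 1/2
  have hint : Integrable (gaussianPDFReal μ v) := integrable_gaussianPDFReal μ v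
  have hhalf : ∫ x in Iic μ, gaussianPDFReal μ v x = 1 / 2 := by
    have hmp : MeasurePreserving (fun x : ℝ => x + μ) volume volume :=
      measurePreserving_add_right volume μ
    have hemb : MeasurableEmbedding (fun x : ℝ => x + μ) :=
      (MeasurableEquiv.addRight μ).measurableEmbedding
    have htrans := hmp.setIntegral_preimage_emb hemb (gaussianPDFReal μ v) (Iic μ)
    have hpre : (fun x : ℝ => x + μ) ⁻¹' Iic μ = Iic 0 := by
      ext x; simp
    rw [hpre] at htrans
    rw [← htrans]
    have heq : ∀ x : ℝ, gaussianPDFReal μ v (x + μ)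
        = K * Real.exp (-(2 * (v:ℝ))⁻¹ * x ^ 2) := by
      intro x
      rw [hpdf]
      congr 2
      rw [div_pow, hcsq]
      field_simp
      ring
    simp_rw [heq]
    rw [MeasureTheory.integral_const_mul]
    have hneg : ∫ x in Iic (0:ℝ), Real.exp (-(2 * (v:ℝ))⁻¹ * x ^ 2)
        = ∫ x in Ioi (0:ℝ), Real.exp (-(2 * (v:ℝ))⁻¹ * x ^ 2) := by
      have := integral_comp_neg_Iic (c := (0:ℝ))
        (f := fun x => Real.exp (-(2 * (v:ℝ))⁻¹ * x ^ 2))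
      simp only [neg_zero] at this
      rw [← this]
      congr 1
      ext x
      ring_nf
    rw [hneg, integral_gaussian_Ioi]
    have : Real.sqrt (π / (2 * (v:ℝ))⁻¹) = Real.sqrt (2 * π * v) := by
      field_simp
    rw [this, hK]
    field_simp
  -- interval part
  have hdiff : ∫ x in μ..a, gaussianPDFReal μ v x
      = erf ((a - μ) / c) / 2 := by
    have h1 : ∀ x : ℝ, gaussianPDFReal μ v x
        = (fun u => K * Real.exp (-(u / c) ^ 2)) (x - μ) := by
      intro x; rw [hpdf]
    calc ∫ x in μ..a, gaussianPDFReal μ v x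
        = ∫ x in μ..a, K * Real.exp (-((x - μ) / c) ^ 2) := by simp_rw [hpdf]
      _ = ∫ u in (0:ℝ)..a - μ, K * Real.exp (-(u / c) ^ 2) := by
          simpa using intervalIntegral.integral_comp_sub_right
            (a := μ) (b := a) (fun u => K * Real.exp (-(u / c) ^ 2)) μ
      _ = c • ∫ u in (0:ℝ)..(a - μ)/c, K * Real.exp (-u ^ 2) := by
          simpa using intervalIntegral.integral_comp_div (a := 0) (b := a - μ)
            (fun t => K * Real.exp (-t ^ 2)) (ne_of_gt hcpos)
      _ = c * K * ∫ u in (0:ℝ)..(a - μ)/c, Real.exp (-u ^ 2) := by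
          rw [intervalIntegral.integral_const_mul, smul_eq_mul]; ring
      _ = erf ((a - μ) / c) / 2 := by
          rw [erf]
          have hcK : c * K = 1 / Real.sqrt π := by
            rw [hK, hc]
            rw [show 2 * π * (v:ℝ) = π * (2 * v) by ring, Real.sqrt_mul Real.pi_pos.le]
            have hπ : Real.sqrt π ≠ 0 := ne_of_gt (Real.sqrt_pos.2 Real.pi_pos)
            field_simp
          rw [hcK]
          have hπ : Real.sqrt π ≠ 0 := ne_of_gt (Real.sqrt_pos.2 Real.pi_pos)
          field_simp
  have hsplit := intervalIntegral.integral_Iic_sub_Iic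
    (hint.integrableOn (s := Iic μ)) (hint.integrableOn (s := Iic a))
  rw [hhalf, hdiff] at hsplit
  linarith

/-- For Δ_N ~ N(μ, τ²) with μ = o_x + c₁ o_z, τ = σ√(1+c₁²), and r ∈ (1/2, 1),
the minimizer of |s| over {s : P(Δ_N + s ≤ 0) ≥ r} equals
-max(0, erf⁻¹(2r-1)·σ·√(2(1+c₁²)) + o_x + c₁ o_z). -/
theorem stmt_1 (σ c₁ ox oz r : ℝ) (hσ : 0 < σ) (hr : r ∈ Set.Ioo (1 / 2 : ℝ) 1) :
    let μ := ox + c₁ * oz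
    let S : Set ℝ := {s | ENNReal.ofReal r ≤
      (gaussianReal μ ((σ ^ 2 * (1 + c₁ ^ 2)).toNNReal)) {x | x + s ≤ 0}}
    let sstar := -max 0 (erfinv (2 * r - 1) * σ * Real.sqrt (2 * (1 + c₁ ^ 2)) + ox + c₁ * oz)
    sstar ∈ S ∧ ∀ s ∈ S, |sstar| ≤ |s| := by
  intro μ S sstar
  obtain ⟨hr1, hr2⟩ := hr
  set v : NNReal := (σ ^ 2 * (1 + c₁ ^ 2)).toNNReal with hv
  have hvpos : (0:ℝ) < σ ^ 2 * (1 + c₁ ^ 2) := by positivity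
  have hvc : (v:ℝ) = σ ^ 2 * (1 + c₁ ^ 2) := Real.coe_toNNReal _ hvpos.le
  have hvne : v ≠ 0 := (Real.toNNReal_pos.mpr hvpos).ne'
  have hvpos' : (0:ℝ) < (v:ℝ) := by rw [hvc]; exact hvpos
  set c : ℝ := σ * Real.sqrt (2 * (1 + c₁ ^ 2)) with hcdef
  have hcpos : 0 < c := by
    apply mul_pos hσ
    exact Real.sqrt_pos.2 (by positivity)
  have hcsqrt : Real.sqrt (2 * (v:ℝ)) = c := by
    rw [hvc, hcdef, show 2 * (σ ^ 2 * (1 + c₁ ^ 2)) = σ ^ 2 * (2 * (1 + c₁ ^ 2)) by ring,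
      Real.sqrt_mul (by positivity), Real.sqrt_sq hσ.le]
  set e : ℝ := erfinv (2 * r - 1) with he
  have herf : erf e = 2 * r - 1 := erf_erfinv (by linarith) (by linarith)
  set q : ℝ := e * σ * Real.sqrt (2 * (1 + c₁ ^ 2)) + ox + c₁ * oz with hq
  have hqec : q = e * c + μ := by rw [hq, hcdef]; ring
  -- membership characterization
  have hmeas : ∀ s : ℝ, ({x : ℝ | x + s ≤ 0} : Set ℝ) = Set.Iic (-s) := by
    intro s; ext x; simp [Set.mem_Iic]; constructor <;> intro h <;> linarith
  have hG : ∀ s : ℝ, (gaussianReal μ v) {x | x + s ≤ 0}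
      = ENNReal.ofReal ((1 + erf ((-s - μ) / c)) / 2) := by
    intro s
    rw [hmeas s, gaussianReal_apply_eq_integral μ hvne, gauss_cdf μ v hvpos', hcsqrt]
  have hkey : ∀ s : ℝ, s ∈ S ↔ s ≤ -q := by
    intro s
    have hGr : (0:ℝ) ≤ ∫ x in Set.Iic (-s), gaussianPDFReal μ v x :=
      MeasureTheory.setIntegral_nonneg measurableSet_Iic fun x _ => gaussianPDFReal_nonneg μ v x
    have hval : ∫ x in Set.Iic (-s), gaussianPDFReal μ v x
        = (1 + erf ((-s - μ) / c)) / 2 := by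
      rw [gauss_cdf μ v hvpos', hcsqrt]
    have hnn : (0:ℝ) ≤ (1 + erf ((-s - μ) / c)) / 2 := hval ▸ hGr
    have h1 : s ∈ S ↔ r ≤ (1 + erf ((-s - μ) / c)) / 2 := by
      rw [Set.mem_setOf_eq, hG s, ENNReal.ofReal_le_ofReal_iff hnn]
    rw [h1]
    constructor
    · intro h
      have h2 : erf e ≤ erf ((-s - μ) / c) := by rw [herf]; linarith
      have h3 : e ≤ (-s - μ) / c := erf_strictMono.le_iff_le.mp h2
      rw [le_div_iff₀ hcpos] at h3
      rw [hqec]; linarith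
    · intro h
      rw [hqec] at h
      have h3 : e ≤ (-s - μ) / c := by
        rw [le_div_iff₀ hcpos]; linarith
      have h2 : erf e ≤ erf ((-s - μ) / c) := erf_strictMono.le_iff_le.mpr h3
      rw [herf] at h2; linarith
  constructor
  · rw [hkey]
    have : q ≤ max 0 q := le_max_right 0 q
    simp only [sstar]
    linarith
  · intro s hs
    rw [hkey] at hs
    have habs : |sstar| = max 0 q := by
      simp only [sstar]
      rw [abs_neg, abs_of_nonneg (le_max_left 0 q)]
    rw [habs]
    rcases le_total q 0 with h | h
    · rw [max_eq_left h]
      exact abs_nonneg s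
    · rw [max_eq_right h]
      have : -s ≤ |s| := neg_le_abs s
      linarith
end

section
/- Let f, g : ℝ_+^n → ℝ be increasing functions (with respect to the componentwise order) and let b ∈ ℝ_+^n. Then for x ∈ [0, b], the constraint f(x) - g(x) ≤ 0 holds if and only if there exists t ∈ [0, f(b) - f(0)] such that f(x) + t ≤ f(b) and g(x) + t ≥ f(b). -/
/-- For increasing f, g on ℝ_+^n and x in the box [0, b], the difference-of-monotonic
constraint f(x) - g(x) ≤ 0 holds iff there exists t ∈ [0, f(b) - f(0)] with
f(x) + t ≤ f(b) and g(x) + t ≥ f(b). -/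
theorem stmt_10 (n : ℕ) (f g : (Fin n → ℝ) → ℝ) (b : Fin n → ℝ) (hb : 0 ≤ b)
    (hf : MonotoneOn f (Set.Ici (0 : Fin n → ℝ)))
    (hg : MonotoneOn g (Set.Ici (0 : Fin n → ℝ)))
    (x : Fin n → ℝ) (hx0 : 0 ≤ x) (hxb : x ≤ b) :
    f x - g x ≤ 0 ↔
      ∃ t : ℝ, 0 ≤ t ∧ t ≤ f b - f 0 ∧ f x + t ≤ f b ∧ g x + t ≥ f b := by
  constructor
  · intro h
    refine ⟨f b - f x, ?_, ?_, by linarith, by linarith⟩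
    · have := hf hx0 hb hxb
      linarith
    · have := hf (Set.mem_Ici.mpr (le_refl 0)) hx0 hx0
      linarith
  · rintro ⟨t, ht0, _, h1, h2⟩
    linarith
end
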